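/- Let (S_n)_{n≥0} be a conditionally symmetric square integrable martingale with S_0 = 0 and let [S]_n = Σ_{i=1}^n (S_i - S_{i-1})². Then for every λ ∈ ℝ, the process (exp(λS_n - (λ²/2)[S]_n))_{n≥0} is a supermartingale with initial value 1. -/

import Mathlib

open MeasureTheory Finset

lemma g_le_half (l y : ℝ) : l * y - l ^ 2 / 2 * y ^ 2 ≤ 1 / 2 := by
  nlinarith [sq_nonneg (l * y - 1)]

lemma g_pair (l y : ℝ) :
    Real.exp (l * y - l ^ 2 / 2 * y ^ 2) + Real.exp (l * (-y) - l ^ 2 / 2 * (-y) ^ 2) ≤ 2 := by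
  have h := Real.cosh_le_exp_half_sq (l * y)
  rw [Real.cosh_eq] at h
  have e1 : Real.exp (l * y - l ^ 2 / 2 * y ^ 2)
      = Real.exp (l * y) / Real.exp ((l * y) ^ 2 / 2) := by
    rw [← Real.exp_sub]; ring_nf
  have e2 : Real.exp (l * (-y) - l ^ 2 / 2 * (-y) ^ 2)
      = Real.exp (-(l * y)) / Real.exp ((l * y) ^ 2 / 2) := by
    rw [← Real.exp_sub]; ring_nf
  rw [e1, e2, ← add_div, div_le_iff₀ (Real.exp_pos _)]
  linarith

theorem exp_supermartingale_of_cond_symm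
    {Ω : Type*} {m : MeasurableSpace Ω} {μ : Measure Ω} [IsProbabilityMeasure μ]
    (F : Filtration ℕ m) (S : ℕ → Ω → ℝ)
    (hmart : Martingale S F μ)
    (hL2 : ∀ n, MemLp (S n) 2 μ)
    (h0 : S 0 = 0)
    (hsymm : ∀ n, ∀ g : ℝ → ℝ, Measurable g → (∃ C, ∀ y, |g y| ≤ C) →
      μ[fun ω => g (S (n + 1) ω - S n ω) | F n]
        =ᵐ[μ] μ[fun ω => g (-(S (n + 1) ω - S n ω)) | F n])
    (l : ℝ) :
    Supermartingale
      (fun n ω => Real.exp (l * S n ω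
        - l ^ 2 / 2 * ∑ i ∈ range n, (S (i + 1) ω - S i ω) ^ 2)) F μ ∧
    (∀ ω, Real.exp (l * S 0 ω
        - l ^ 2 / 2 * ∑ i ∈ range 0, (S (i + 1) ω - S i ω) ^ 2) = 1) := by
  set g : ℝ → ℝ := fun y => Real.exp (l * y - l ^ 2 / 2 * y ^ 2) with hgdef
  set X : ℕ → Ω → ℝ := fun n ω => Real.exp (l * S n ω
        - l ^ 2 / 2 * ∑ i ∈ range n, (S (i + 1) ω - S i ω) ^ 2) with hXdef
  -- basic facts about g
  have hg_pos : ∀ y, 0 < g y := fun y => Real.exp_pos _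
  have hg_le : ∀ y, g y ≤ Real.exp (1 / 2) := fun y =>
    Real.exp_le_exp.2 (g_le_half l y)
  have hg_meas : Measurable g := by
    apply Real.measurable_exp.comp
    exact ((measurable_id.const_mul l).sub ((measurable_id.pow_const 2).const_mul (l ^ 2 / 2)))
  have hg_bdd : ∃ C, ∀ y, |g y| ≤ C :=
    ⟨Real.exp (1 / 2), fun y => by rw [abs_of_pos (hg_pos y)]; exact hg_le y⟩
  -- product representation of X
  have hS : ∀ n ω, S n ω = ∑ i ∈ range n, (S (i + 1) ω - S i ω) := by
    intro n ω
    rw [Finset.sum_range_sub (fun i => S i ω)]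
    simp [h0]
  have hprod : ∀ n ω, X n ω = ∏ i ∈ range n, g (S (i + 1) ω - S i ω) := by
    intro n ω
    rw [hXdef]
    simp only
    rw [hS n ω, Finset.mul_sum, Finset.mul_sum, ← Finset.sum_sub_distrib, Real.exp_sum]
  -- measurability of X n w.r.t. F n
  have hSn : ∀ {i n : ℕ}, i ≤ n → Measurable[F n] (S i) := fun {i n} h =>
    ((hmart.stronglyAdapted i).mono (F.mono h)).measurable
  have hXmeas : ∀ n, StronglyMeasurable[F n] (X n) := by
    intro n
    apply Measurable.stronglyMeasurable
    apply Real.measurable_exp.comp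
    apply Measurable.sub
    · exact (hSn le_rfl).const_mul l
    · apply Measurable.const_mul
      apply Finset.measurable_sum
      intro i hi
      have hi' : i < n := mem_range.1 hi
      exact ((hSn hi').sub (hSn hi'.le)).pow_const 2
  -- bounds and integrability of X
  have hX_nonneg : ∀ n ω, 0 ≤ X n ω := fun n ω => (Real.exp_pos _).le
  have hX_le : ∀ n ω, X n ω ≤ Real.exp (1 / 2) ^ n := by
    intro n ω
    rw [hprod]
    calc ∏ i ∈ range n, g (S (i + 1) ω - S i ω)
        ≤ ∏ _i ∈ range n, Real.exp (1 / 2) :=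
          Finset.prod_le_prod (fun i _ => (hg_pos _).le) (fun i _ => hg_le _)
      _ = Real.exp (1 / 2) ^ n := by simp
  have hXint : ∀ n, Integrable (X n) μ := by
    intro n
    refine (integrable_const (Real.exp (1 / 2) ^ n)).mono'
      (((hXmeas n).mono (F.le n)).aestronglyMeasurable) (ae_of_all _ fun ω => ?_)
    rw [Real.norm_eq_abs, abs_of_nonneg (hX_nonneg n ω)]
    exact hX_le n ω
  -- the supermartingale inequality
  have hstep : ∀ n, μ[X (n + 1)|F n] ≤ᵐ[μ] X n := by
    intro n
    set G : Ω → ℝ := fun ω => g (S (n + 1) ω - S n ω) with hGdef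
    set Gneg : Ω → ℝ := fun ω => g (-(S (n + 1) ω - S n ω)) with hGnegdef
    have hDmeas : Measurable (fun ω => S (n + 1) ω - S n ω) :=
      ((hmart.stronglyAdapted (n + 1)).mono (F.le (n + 1))).measurable.sub
        ((hmart.stronglyAdapted n).mono (F.le n)).measurable
    have hGmeas : Measurable G := hg_meas.comp hDmeas
    have hGnegmeas : Measurable Gneg := hg_meas.comp hDmeas.neg
    have hGint : Integrable G μ := by
      refine (integrable_const (Real.exp (1 / 2))).mono'
        hGmeas.aestronglyMeasurable (ae_of_all _ fun ω => ?_)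
      rw [Real.norm_eq_abs, abs_of_pos (hg_pos _)]
      exact hg_le _
    have hGnegint : Integrable Gneg μ := by
      refine (integrable_const (Real.exp (1 / 2))).mono'
        hGnegmeas.aestronglyMeasurable (ae_of_all _ fun ω => ?_)
      rw [Real.norm_eq_abs, abs_of_pos (hg_pos _)]
      exact hg_le _
    -- conditional expectation of G is ≤ 1
    have hsym := hsymm n g hg_meas hg_bdd
    have hadd : μ[fun ω => G ω + Gneg ω|F n] =ᵐ[μ] μ[G|F n] + μ[Gneg|F n] :=
      condExp_add hGint hGnegint (F n)
    have hle2 : μ[fun ω => G ω + Gneg ω|F n] ≤ᵐ[μ] fun _ => (2 : ℝ) := by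
      have h2 : μ[fun ω => G ω + Gneg ω|F n] ≤ᵐ[μ] μ[fun _ => (2 : ℝ)|F n] := by
        refine condExp_mono (hGint.add hGnegint) (integrable_const 2)
          (ae_of_all _ fun ω => ?_)
        have := g_pair l (S (n + 1) ω - S n ω)
        simpa [hGdef, hGnegdef, hgdef] using this
      rwa [condExp_const (F.le n)] at h2
    rw [← hGdef, ← hGnegdef] at hsym
    have hcond_le : μ[G|F n] ≤ᵐ[μ] fun _ => (1 : ℝ) := by
      filter_upwards [hsym, hadd, hle2] with ω h1 h2 h3
      simp only [Pi.add_apply] at h2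
      linarith
    -- pull-out
    have hXsucc : X (n + 1) = fun ω => X n ω * G ω := by
      funext ω
      rw [hprod (n + 1) ω, Finset.prod_range_succ, ← hprod n ω]
    have hXG_int : Integrable (X n * G) μ := by
      rw [show X n * G = X (n + 1) by rw [hXsucc]; rfl]
      exact hXint (n + 1)
    have hpull : μ[X n * G|F n] =ᵐ[μ] X n * μ[G|F n] :=
      condExp_mul_of_stronglyMeasurable_left (hXmeas n) hXG_int hGint
    have heq : μ[X (n + 1)|F n] =ᵐ[μ] μ[X n * G|F n] := by
      rw [show X n * G = X (n + 1) by rw [hXsucc]; rfl]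
    filter_upwards [heq, hpull, hcond_le] with ω h1 h2 h3
    rw [h1]
    calc (μ[X n * G|F n]) ω = X n ω * (μ[G|F n]) ω := h2
      _ ≤ X n ω * 1 := mul_le_mul_of_nonneg_left h3 (hX_nonneg n ω)
      _ = X n ω := mul_one _
  refine ⟨supermartingale_nat (fun n => hXmeas n) hXint hstep, fun ω => ?_⟩
  simp [h0]
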